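/- Let k be a positive integer, s ≥ 3 an integer, and λ an integer with 0 ≤ λ < 2^s. Then ρ^(1)_{k,λ}(2^s) = 2^{(s−3)(k−1)} · ρ^(1)_{k, λ mod 8}(8). -/

import Mathlib

/-- `rho1 k lam p s` is the number of `k`-tuples `(x₁,…,x_k) ∈ (ℤ/p^sℤ)^k` with
`x₁² + ⋯ + x_k² ≡ lam (mod p^s)` such that `p ∤ xᵢ` for at least one index `i`. -/
noncomputable def rho1 (k : ℕ) (lam : ℤ) (p s : ℕ) : ℕ :=
  Nat.card {x : Fin k → ZMod (p ^ s) //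
    (∑ i, x i ^ 2 = (lam : ZMod (p ^ s))) ∧ ∃ i, ¬ (p : ZMod (p ^ s)) ∣ x i}

namespace Rho1Aux



lemma natCast_dvd_iff_dvd_val {N : ℕ} [NeZero N] {d : ℕ} (hd : d ∣ N) (x : ZMod N) :
    (d : ZMod N) ∣ x ↔ d ∣ x.val := by
  constructor
  · rintro ⟨u, rfl⟩
    rw [ZMod.val_mul, ZMod.val_natCast]
    exact (Nat.dvd_mod_iff hd).mpr (Dvd.dvd.mul_right ((Nat.dvd_mod_iff hd).mpr dvd_rfl) _)
  · rintro ⟨c, hc⟩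
    refine ⟨(c : ZMod N), ?_⟩
    conv_lhs => rw [← ZMod.natCast_zmod_val x]
    rw [hc]
    push_cast
    ring

def zmodMulEquiv (n : ℕ) [NeZero n] : ZMod (2 * n) ≃ ZMod n × ZMod 2 where
  toFun y := ((ZMod.cast y : ZMod n), ((y.val / n : ℕ) : ZMod 2))
  invFun z := ((z.1.val + n * z.2.val : ℕ) : ZMod (2 * n))
  left_inv y := by
    have hv : (ZMod.cast y : ZMod n).val = y.val % n := by
      rw [ZMod.cast_eq_val, ZMod.val_natCast]
    have hq : ((y.val / n : ℕ) : ZMod 2).val = y.val / n := by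
      rw [ZMod.val_natCast, Nat.mod_eq_of_lt]
      exact Nat.div_lt_of_lt_mul (by simpa [mul_comm] using y.val_lt)
    show (((ZMod.cast y : ZMod n).val + n * ((y.val / n : ℕ) : ZMod 2).val : ℕ) : ZMod (2 * n)) = y
    rw [hv, hq, Nat.mod_add_div, ZMod.natCast_zmod_val]
  right_inv z := by
    obtain ⟨x, t⟩ := z
    have hxn := x.val_lt
    have ht2 := t.val_lt
    have hlt : x.val + n * t.val < 2 * n := by
      have : n * t.val ≤ n * 1 := Nat.mul_le_mul_left n (by omega)
      omega
    have hval : (((x.val + n * t.val : ℕ)) : ZMod (2 * n)).val = x.val + n * t.val :=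
      ZMod.val_natCast_of_lt hlt
    refine Prod.ext ?_ ?_
    · show (ZMod.cast (((x.val + n * t.val : ℕ)) : ZMod (2 * n)) : ZMod n) = x
      rw [ZMod.cast_natCast (dvd_mul_left n 2)]
      push_cast [ZMod.natCast_self]
      simp [ZMod.natCast_zmod_val]
    · show (((((x.val + n * t.val : ℕ)) : ZMod (2 * n)).val / n : ℕ) : ZMod 2) = t
      rw [hval, Nat.add_mul_div_left _ _ (Nat.pos_of_ne_zero (NeZero.ne n)),
        Nat.div_eq_of_lt hxn, zero_add, ZMod.natCast_zmod_val]

lemma card_subtype_comp (n : ℕ) [NeZero n] (k : ℕ) (p : (Fin k → ZMod n) → Prop) :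
    Nat.card {y : Fin k → ZMod (2 * n) // p (fun i => (ZMod.cast (y i) : ZMod n))} =
      2 ^ k * Nat.card {x : Fin k → ZMod n // p x} := by
  have e1 : {y : Fin k → ZMod (2 * n) // p (fun i => (ZMod.cast (y i) : ZMod n))} ≃
      {z : Fin k → ZMod n × ZMod 2 // p (fun i => (z i).1)} :=
    Equiv.subtypeEquiv (Equiv.piCongrRight fun _ : Fin k => zmodMulEquiv n) (fun y => Iff.rfl)
  have e2 : {z : Fin k → ZMod n × ZMod 2 // p (fun i => (z i).1)} ≃
      {w : (Fin k → ZMod n) × (Fin k → ZMod 2) // p w.1} :=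
    Equiv.subtypeEquiv (Equiv.arrowProdEquivProdArrow (Fin k) (fun _ => ZMod n) (fun _ => ZMod 2))
      (fun z => Iff.rfl)
  have e3 := Equiv.prodSubtypeFstEquivSubtypeProd (α := Fin k → ZMod n) (β := Fin k → ZMod 2)
    (p := p)
  rw [Nat.card_congr ((e1.trans e2).trans e3), Nat.card_prod,
    Nat.card_eq_fintype_card (α := Fin k → ZMod 2)]
  simp [ZMod.card]
  ring

lemma sq_lift (s : ℕ) (hs : 1 ≤ s) (y : ZMod (2 * 2 ^ s)) :
    y ^ 2 = ((((ZMod.cast y : ZMod (2 ^ s)).val : ℕ)) : ZMod (2 * 2 ^ s)) ^ 2 := by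
  haveI : NeZero ((2:ℕ) ^ s) := ⟨by positivity⟩
  haveI : NeZero (2 * (2:ℕ) ^ s) := ⟨by positivity⟩
  have h1 : (ZMod.cast y : ZMod (2 ^ s)).val = y.val % 2 ^ s := by
    rw [ZMod.cast_eq_val, ZMod.val_natCast]
  have h2 : y = ((y.val % 2 ^ s : ℕ) : ZMod (2 * 2 ^ s))
      + ((2 ^ s : ℕ) : ZMod (2 * 2 ^ s)) * ((y.val / 2 ^ s : ℕ) : ZMod (2 * 2 ^ s)) := by
    conv_lhs => rw [← ZMod.natCast_zmod_val y, ← Nat.mod_add_div y.val (2 ^ s)]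
    push_cast
    ring
  have h2n : ((2 ^ s : ℕ) : ZMod (2 * 2 ^ s)) * 2 = 0 := by
    have h := ZMod.natCast_self (2 * 2 ^ s)
    push_cast at h ⊢
    linear_combination h
  have hn2 : ((2 ^ s : ℕ) : ZMod (2 * 2 ^ s)) ^ 2 = 0 := by
    rw [← Nat.cast_pow, ZMod.natCast_eq_zero_iff]
    rw [pow_two]
    exact mul_dvd_mul (dvd_pow_self 2 (by omega)) dvd_rfl
  rw [h1]
  linear_combination (y + ((y.val % 2 ^ s : ℕ) : ZMod (2 * 2 ^ s))
      + ((2 ^ s : ℕ) : ZMod (2 * 2 ^ s)) * ((y.val / 2 ^ s : ℕ) : ZMod (2 * 2 ^ s))) * h2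
    + (((y.val % 2 ^ s : ℕ) : ZMod (2 * 2 ^ s)) * ((y.val / 2 ^ s : ℕ) : ZMod (2 * 2 ^ s))) * h2n
    + (((y.val / 2 ^ s : ℕ) : ZMod (2 * 2 ^ s))) ^ 2 * hn2

lemma two_dvd_iff (s : ℕ) (hs : 1 ≤ s) (y : ZMod (2 * 2 ^ s)) :
    (2 : ZMod (2 * 2 ^ s)) ∣ y ↔ (2 : ZMod (2 ^ s)) ∣ (ZMod.cast y : ZMod (2 ^ s)) := by
  haveI : NeZero ((2:ℕ) ^ s) := ⟨by positivity⟩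
  haveI : NeZero (2 * (2:ℕ) ^ s) := ⟨by positivity⟩
  have hv : (ZMod.cast y : ZMod (2 ^ s)).val = y.val % 2 ^ s := by
    rw [ZMod.cast_eq_val, ZMod.val_natCast]
  rw [show ((2 : ZMod (2 * 2 ^ s))) = ((2 : ℕ) : ZMod (2 * 2 ^ s)) from (Nat.cast_ofNat).symm,
    natCast_dvd_iff_dvd_val (dvd_mul_right 2 _),
    show ((2 : ZMod (2 ^ s))) = ((2 : ℕ) : ZMod (2 ^ s)) from (Nat.cast_ofNat).symm,
    natCast_dvd_iff_dvd_val (dvd_pow_self 2 (by omega)), hv,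
    Nat.dvd_mod_iff (dvd_pow_self 2 (by omega))]



noncomputable def oddIdx {n k : ℕ} (x : Fin k → ZMod n) (h : ∃ i, ¬ (2 : ZMod n) ∣ x i) :
    Fin k :=
  letI := Classical.decPred fun i : Fin k => ¬ (2 : ZMod n) ∣ x i
  (Finset.univ.filter fun i : Fin k => ¬ (2 : ZMod n) ∣ x i).min'
    ⟨h.choose, Finset.mem_filter.mpr ⟨Finset.mem_univ _, h.choose_spec⟩⟩

lemma oddIdx_spec {n k : ℕ} (x : Fin k → ZMod n) (h : ∃ i, ¬ (2 : ZMod n) ∣ x i) :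
    ¬ (2 : ZMod n) ∣ x (oddIdx x h) := by
  letI := Classical.decPred fun i : Fin k => ¬ (2 : ZMod n) ∣ x i
  unfold oddIdx
  exact (Finset.mem_filter.mp (Finset.min'_mem
    (Finset.univ.filter fun i : Fin k => ¬ (2 : ZMod n) ∣ x i) _)).2

lemma oddIdx_congr {n k : ℕ} {x y : Fin k → ZMod n}
    (h : ∀ i, (2 : ZMod n) ∣ x i ↔ (2 : ZMod n) ∣ y i) (hx : ∃ i, ¬ (2 : ZMod n) ∣ x i)
    (hy : ∃ i, ¬ (2 : ZMod n) ∣ y i) : oddIdx x hx = oddIdx y hy := by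
  letI := Classical.decPred fun i : Fin k => ¬ (2 : ZMod n) ∣ x i
  letI := Classical.decPred fun i : Fin k => ¬ (2 : ZMod n) ∣ y i
  have hset : (Finset.univ.filter fun i : Fin k => ¬ (2 : ZMod n) ∣ x i)
      = (Finset.univ.filter fun i : Fin k => ¬ (2 : ZMod n) ∣ y i) := by
    ext i
    simp [h i]
  unfold oddIdx
  apply le_antisymm
  · exact Finset.min'_le _ _ (by rw [hset]; exact Finset.min'_mem _ _)
  · exact Finset.min'_le _ _ (by rw [← hset]; exact Finset.min'_mem _ _)

open Classical in
noncomputable def sig (s k : ℕ) (x : Fin k → ZMod (2 ^ s)) : Fin k → ZMod (2 ^ s) :=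
  if h : ∃ i, ¬ (2 : ZMod (2 ^ s)) ∣ x i then
    Function.update x (oddIdx x h) (x (oddIdx x h) + ((2 ^ (s - 1) : ℕ) : ZMod (2 ^ s)))
  else x

lemma sig_eq {s k : ℕ} (x : Fin k → ZMod (2 ^ s)) (h : ∃ i, ¬ (2 : ZMod (2 ^ s)) ∣ x i) :
    sig s k x = Function.update x (oddIdx x h)
      (x (oddIdx x h) + ((2 ^ (s - 1) : ℕ) : ZMod (2 ^ s))) := dif_pos h

lemma two_dvd_pow_sub_one {s : ℕ} (hs : 2 ≤ s) :
    (2 : ZMod (2 ^ s)) ∣ ((2 ^ (s - 1) : ℕ) : ZMod (2 ^ s)) := by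
  refine ⟨((2 ^ (s - 2) : ℕ) : ZMod (2 ^ s)), ?_⟩
  have h1 : (2:ℕ) ^ (s - 1) = 2 * 2 ^ (s - 2) := by
    have h2 : s - 1 = (s - 2) + 1 := by omega
    rw [h2, pow_succ]; ring
  rw [h1]; push_cast; ring

lemma sig_parity {s k : ℕ} (hs : 2 ≤ s) (x : Fin k → ZMod (2 ^ s))
    (h : ∃ i, ¬ (2 : ZMod (2 ^ s)) ∣ x i) (i : Fin k) :
    ((2 : ZMod (2 ^ s)) ∣ sig s k x i) ↔ (2 : ZMod (2 ^ s)) ∣ x i := by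
  rw [sig_eq x h]
  rcases eq_or_ne i (oddIdx x h) with rfl | hne
  · rw [Function.update_self]
    exact dvd_add_left (two_dvd_pow_sub_one hs)
  · rw [Function.update_of_ne hne]



lemma sig_exists {s k : ℕ} (hs : 2 ≤ s) (x : Fin k → ZMod (2 ^ s))
    (h : ∃ i, ¬ (2 : ZMod (2 ^ s)) ∣ x i) : ∃ i, ¬ (2 : ZMod (2 ^ s)) ∣ sig s k x i :=
  ⟨oddIdx x h, by rw [sig_parity hs x h]; exact oddIdx_spec x h⟩

lemma pow_sub_one_add_self {s : ℕ} (hs : 1 ≤ s) :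
    ((2 ^ (s - 1) : ℕ) : ZMod (2 ^ s)) + ((2 ^ (s - 1) : ℕ) : ZMod (2 ^ s)) = 0 := by
  rw [← Nat.cast_add, show (2:ℕ) ^ (s - 1) + 2 ^ (s - 1) = 2 ^ (s - 1) * 2 from by ring,
    show (2:ℕ) ^ (s - 1) * 2 = 2 ^ s from by rw [← pow_succ]; congr 1; omega,
    ZMod.natCast_self]

lemma sig_invol {s k : ℕ} (hs : 2 ≤ s) (x : Fin k → ZMod (2 ^ s))
    (h : ∃ i, ¬ (2 : ZMod (2 ^ s)) ∣ x i) : sig s k (sig s k x) = x := by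
  have h' := sig_exists hs x h
  have hidx : oddIdx (sig s k x) h' = oddIdx x h :=
    oddIdx_congr (fun i => sig_parity hs x h i) h' h
  rw [sig_eq (sig s k x) h', hidx, sig_eq x h, Function.update_self, Function.update_idem,
    add_assoc, pow_sub_one_add_self (by omega), add_zero, Function.update_eq_self]

lemma pow_sub_one_sq {s : ℕ} (hs : 2 ≤ s) :
    ((2 ^ (s - 1) : ℕ) : ZMod (2 ^ s)) ^ 2 = 0 := by
  rw [← Nat.cast_pow, ZMod.natCast_eq_zero_iff, ← pow_mul]
  exact pow_dvd_pow 2 (by omega)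

lemma pow_sub_one_mul_two {s : ℕ} (hs : 1 ≤ s) :
    ((2 ^ (s - 1) : ℕ) : ZMod (2 ^ s)) * 2 = 0 := by
  have h := pow_sub_one_add_self hs
  linear_combination h

lemma sig_sum {s k : ℕ} (hs : 2 ≤ s) (x : Fin k → ZMod (2 ^ s))
    (h : ∃ i, ¬ (2 : ZMod (2 ^ s)) ∣ x i) :
    ∑ i, sig s k x i ^ 2 = ∑ i, x i ^ 2 := by
  rw [sig_eq x h]
  rw [← Finset.add_sum_erase _ _ (Finset.mem_univ (oddIdx x h)),
    ← Finset.add_sum_erase _ (fun i => x i ^ 2) (Finset.mem_univ (oddIdx x h))]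
  congr 1
  · rw [Function.update_self]
    linear_combination (x (oddIdx x h)) * pow_sub_one_mul_two (by omega : 1 ≤ s)
      + pow_sub_one_sq hs
  · exact Finset.sum_congr rfl fun i hi => by
      rw [Function.update_of_ne (Finset.ne_of_mem_erase hi)]

lemma main_sq {s : ℕ} (hs : 3 ≤ s) (u : ZMod (2 ^ s)) (hodd : ¬ 2 ∣ u.val) :
    (((u + ((2 ^ (s - 1) : ℕ) : ZMod (2 ^ s))).val : ℕ) : ZMod (2 * 2 ^ s)) ^ 2
      = ((u.val : ℕ) : ZMod (2 * 2 ^ s)) ^ 2 + ((2 ^ s : ℕ) : ZMod (2 * 2 ^ s)) := by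
  haveI : NeZero ((2:ℕ) ^ s) := ⟨by positivity⟩
  haveI : NeZero (2 * (2:ℕ) ^ s) := ⟨by positivity⟩
  set b : ℕ := u.val + 2 ^ (s - 1) with hbdef0
  have cval : ((2 ^ (s - 1) : ℕ) : ZMod (2 ^ s)).val = 2 ^ (s - 1) :=
    ZMod.val_natCast_of_lt (Nat.pow_lt_pow_right one_lt_two (by omega))
  have hvadd : (u + ((2 ^ (s - 1) : ℕ) : ZMod (2 ^ s))).val = b % 2 ^ s := by
    rw [ZMod.val_add, cval]
  have hmd : b % 2 ^ s + 2 ^ s * (b / 2 ^ s) = b := Nat.mod_add_div _ _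
  have h' : ((b % 2 ^ s : ℕ) : ZMod (2 * 2 ^ s))
      + ((2 ^ s : ℕ) : ZMod (2 * 2 ^ s)) * ((b / 2 ^ s : ℕ) : ZMod (2 * 2 ^ s))
      = ((b : ℕ) : ZMod (2 * 2 ^ s)) := by
    rw [← Nat.cast_mul, ← Nat.cast_add]
    exact congrArg _ hmd
  have hbdef : ((b : ℕ) : ZMod (2 * 2 ^ s))
      = ((u.val : ℕ) : ZMod (2 * 2 ^ s)) + ((2 ^ (s - 1) : ℕ) : ZMod (2 * 2 ^ s)) := by
    rw [hbdef0, Nat.cast_add]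
  have hA : ((b % 2 ^ s : ℕ) : ZMod (2 * 2 ^ s))
      = ((u.val : ℕ) : ZMod (2 * 2 ^ s)) + ((2 ^ (s - 1) : ℕ) : ZMod (2 * 2 ^ s))
        - ((2 ^ s : ℕ) : ZMod (2 * 2 ^ s)) * ((b / 2 ^ s : ℕ) : ZMod (2 * 2 ^ s)) := by
    rw [eq_sub_iff_add_eq, h']; exact hbdef
  have g1 : ((2 ^ s : ℕ) : ZMod (2 * 2 ^ s)) * 2 = 0 := by
    have h := ZMod.natCast_self (2 * 2 ^ s)
    push_cast at h ⊢
    linear_combination h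
  have g2 : ((2 ^ s : ℕ) : ZMod (2 * 2 ^ s)) ^ 2 = 0 := by
    rw [← Nat.cast_pow, ZMod.natCast_eq_zero_iff, pow_two]
    exact mul_dvd_mul (dvd_pow_self 2 (by omega)) dvd_rfl
  have g3 : ((2 ^ (s - 1) : ℕ) : ZMod (2 * 2 ^ s)) ^ 2 = 0 := by
    rw [← Nat.cast_pow, ZMod.natCast_eq_zero_iff, ← pow_mul]
    refine dvd_trans ?_ (pow_dvd_pow 2 (by omega : s + 1 ≤ (s - 1) * 2))
    exact ⟨1, by rw [pow_succ]; ring⟩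
  have g4 : ((2 ^ (s - 1) : ℕ) : ZMod (2 * 2 ^ s)) * 2 = ((2 ^ s : ℕ) : ZMod (2 * 2 ^ s)) := by
    rw [show ((2 : ZMod (2 * 2 ^ s))) = ((2:ℕ) : ZMod (2 * 2 ^ s)) from (Nat.cast_ofNat).symm,
      ← Nat.cast_mul]
    congr 1
    rw [← pow_succ]; congr 1; omega
  have g5 : ((u.val : ℕ) : ZMod (2 * 2 ^ s)) * ((2 ^ s : ℕ) : ZMod (2 * 2 ^ s))
      = ((2 ^ s : ℕ) : ZMod (2 * 2 ^ s)) := by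
    obtain ⟨w, hw⟩ : ∃ w, u.val = 2 * w + 1 := ⟨u.val / 2, by omega⟩
    have hval : u.val * 2 ^ s = w * (2 * 2 ^ s) + 2 ^ s := by rw [hw]; ring
    calc ((u.val : ℕ) : ZMod (2 * 2 ^ s)) * ((2 ^ s : ℕ) : ZMod (2 * 2 ^ s))
        = ((u.val * 2 ^ s : ℕ) : ZMod (2 * 2 ^ s)) := by rw [Nat.cast_mul]
      _ = ((w * (2 * 2 ^ s) + 2 ^ s : ℕ) : ZMod (2 * 2 ^ s)) := by rw [hval]
      _ = ((2 ^ s : ℕ) : ZMod (2 * 2 ^ s)) := by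
          rw [Nat.cast_add, Nat.cast_mul, ZMod.natCast_self, mul_zero, zero_add]
  rw [hvadd]
  linear_combination (((b % 2 ^ s : ℕ) : ZMod (2 * 2 ^ s)) + ((u.val : ℕ) : ZMod (2 * 2 ^ s))
      + ((2 ^ (s - 1) : ℕ) : ZMod (2 * 2 ^ s))
      - ((2 ^ s : ℕ) : ZMod (2 * 2 ^ s)) * ((b / 2 ^ s : ℕ) : ZMod (2 * 2 ^ s))) * hA
    + g3 + ((b / 2 ^ s : ℕ) : ZMod (2 * 2 ^ s)) ^ 2 * g2
    + (-(((u.val : ℕ) : ZMod (2 * 2 ^ s)) * ((b / 2 ^ s : ℕ) : ZMod (2 * 2 ^ s)))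
       - ((2 ^ (s - 1) : ℕ) : ZMod (2 * 2 ^ s)) * ((b / 2 ^ s : ℕ) : ZMod (2 * 2 ^ s))) * g1
    + ((u.val : ℕ) : ZMod (2 * 2 ^ s)) * g4 + g5

end Rho1Aux

namespace Rho1Aux

lemma sig_liftsum {s k : ℕ} (hs : 3 ≤ s) (x : Fin k → ZMod (2 ^ s))
    (h : ∃ i, ¬ (2 : ZMod (2 ^ s)) ∣ x i) :
    ∑ i, (((sig s k x i).val : ℕ) : ZMod (2 * 2 ^ s)) ^ 2
      = ∑ i, (((x i).val : ℕ) : ZMod (2 * 2 ^ s)) ^ 2 + ((2 ^ s : ℕ) : ZMod (2 * 2 ^ s)) := by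
  haveI : NeZero ((2:ℕ) ^ s) := ⟨by positivity⟩
  haveI : NeZero (2 * (2:ℕ) ^ s) := ⟨by positivity⟩
  have hodd : ¬ 2 ∣ (x (oddIdx x h)).val := by
    have h2 := oddIdx_spec x h
    rw [show ((2 : ZMod (2 ^ s))) = ((2:ℕ) : ZMod (2 ^ s)) from (Nat.cast_ofNat).symm,
      natCast_dvd_iff_dvd_val (dvd_pow_self 2 (by omega))] at h2
    exact h2
  have herase : ∑ i ∈ Finset.univ.erase (oddIdx x h),
      ((((Function.update x (oddIdx x h)
        (x (oddIdx x h) + ((2 ^ (s - 1) : ℕ) : ZMod (2 ^ s)))) i).val : ℕ)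
          : ZMod (2 * 2 ^ s)) ^ 2
      = ∑ i ∈ Finset.univ.erase (oddIdx x h), (((x i).val : ℕ) : ZMod (2 * 2 ^ s)) ^ 2 :=
    Finset.sum_congr rfl fun i hi => by
      rw [Function.update_of_ne (Finset.ne_of_mem_erase hi)]
  rw [sig_eq x h,
    ← Finset.add_sum_erase _ _ (Finset.mem_univ (oddIdx x h)),
    ← Finset.add_sum_erase _ (fun i => (((x i).val : ℕ) : ZMod (2 * 2 ^ s)) ^ 2)
      (Finset.mem_univ (oddIdx x h)),
    herase, Function.update_self, main_sq hs _ hodd]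
  ring

end Rho1Aux

namespace Rho1Aux

lemma lift_sum_cases {s k : ℕ} (hs : 1 ≤ s) (lam : ℤ) (x : Fin k → ZMod (2 ^ s))
    (hP : ∑ i, x i ^ 2 = (lam : ZMod (2 ^ s))) :
    ∑ i, (((x i).val : ℕ) : ZMod (2 * 2 ^ s)) ^ 2 = (lam : ZMod (2 * 2 ^ s)) ∨
    ∑ i, (((x i).val : ℕ) : ZMod (2 * 2 ^ s)) ^ 2
      = (lam : ZMod (2 * 2 ^ s)) + ((2 ^ s : ℕ) : ZMod (2 * 2 ^ s)) := by
  haveI : NeZero ((2:ℕ) ^ s) := ⟨by positivity⟩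
  haveI : NeZero (2 * (2:ℕ) ^ s) := ⟨by positivity⟩
  have hπS : (ZMod.castHom (dvd_mul_left ((2:ℕ) ^ s) 2) (ZMod (2 ^ s)))
      ((∑ i, (((x i).val : ℕ) : ZMod (2 * 2 ^ s)) ^ 2) - (lam : ZMod (2 * 2 ^ s))) = 0 := by
    rw [map_sub, map_intCast, map_sum]
    simp only [map_pow, map_natCast, ZMod.natCast_zmod_val]
    rw [hP, sub_self]
  set z := (∑ i, (((x i).val : ℕ) : ZMod (2 * 2 ^ s)) ^ 2) - (lam : ZMod (2 * 2 ^ s)) with hz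
  have hval : z.val % 2 ^ s = 0 := by
    have h0 : ((ZMod.castHom (dvd_mul_left ((2:ℕ) ^ s) 2) (ZMod (2 ^ s))) z).val = 0 := by
      rw [hπS]; exact ZMod.val_zero
    rwa [ZMod.castHom_apply, ZMod.cast_eq_val, ZMod.val_natCast] at h0
  obtain ⟨c, hc⟩ := Nat.dvd_of_mod_eq_zero hval
  have hlt := z.val_lt
  have hpos : 0 < (2:ℕ) ^ s := by positivity
  have hc2 : c < 2 := by
    by_contra hge
    push_neg at hge
    have : 2 ^ s * 2 ≤ 2 ^ s * c := Nat.mul_le_mul_left _ hge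
    omega
  have hzeq : z = ((2 ^ s * c : ℕ) : ZMod (2 * 2 ^ s)) := by rw [← hc, ZMod.natCast_zmod_val]
  interval_cases c
  · left
    have h1 : z = 0 := by simpa using hzeq
    rw [hz] at h1
    exact sub_eq_zero.mp h1
  · right
    have h1 : z = ((2 ^ s : ℕ) : ZMod (2 * 2 ^ s)) := by simpa using hzeq
    rw [hz] at h1
    rw [eq_add_of_sub_eq h1, add_comm]

end Rho1Aux

namespace Rho1Aux

noncomputable def cnt (k : ℕ) (lam : ℤ) (N : ℕ) : ℕ :=
  Nat.card {x : Fin k → ZMod N //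
    (∑ i, x i ^ 2 = (lam : ZMod N)) ∧ ∃ i, ¬ (2 : ZMod N) ∣ x i}

lemma keyQ {s k : ℕ} (hs : 1 ≤ s) (lam : ℤ) (x : Fin k → ZMod (2 ^ s))
    (hQx : ∑ i, (((x i).val : ℕ) : ZMod (2 * 2 ^ s)) ^ 2 = (lam : ZMod (2 * 2 ^ s))) :
    ∑ i, x i ^ 2 = (lam : ZMod (2 ^ s)) := by
  haveI : NeZero ((2:ℕ) ^ s) := ⟨by positivity⟩
  haveI : NeZero (2 * (2:ℕ) ^ s) := ⟨by positivity⟩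
  have h := congrArg (ZMod.castHom (dvd_mul_left ((2:ℕ) ^ s) 2) (ZMod (2 ^ s))) hQx
  rw [map_intCast, map_sum] at h
  simpa only [map_pow, map_natCast, ZMod.natCast_zmod_val] using h

lemma cnt_step (k : ℕ) (hk : 0 < k) (s : ℕ) (hs : 3 ≤ s) (lam : ℤ) :
    cnt k lam (2 * 2 ^ s) = 2 ^ (k - 1) * cnt k lam (2 ^ s) := by
  classical
  haveI : NeZero ((2:ℕ) ^ s) := ⟨by positivity⟩
  haveI : NeZero (2 * (2:ℕ) ^ s) := ⟨by positivity⟩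
  have hs1 : 1 ≤ s := by omega
  have hs2 : 2 ≤ s := by omega
  have hkk : (2:ℕ) ^ k = 2 ^ (k - 1) * 2 := by
    obtain ⟨m, rfl⟩ : ∃ m, k = m + 1 := ⟨k - 1, by omega⟩
    rw [Nat.add_sub_cancel, pow_succ]
  have hnne : ((2 ^ s : ℕ) : ZMod (2 * 2 ^ s)) ≠ 0 := by
    rw [Ne, ZMod.natCast_eq_zero_iff]
    intro hdvd
    have h1 := Nat.le_of_dvd (by positivity) hdvd
    have h2 : 0 < (2:ℕ) ^ s := by positivity
    omega
  have hnn : ((2 ^ s : ℕ) : ZMod (2 * 2 ^ s)) + ((2 ^ s : ℕ) : ZMod (2 * 2 ^ s)) = 0 := by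
    rw [← Nat.cast_add, show (2:ℕ) ^ s + 2 ^ s = 2 * 2 ^ s from by ring, ZMod.natCast_self]
  have step12 : cnt k lam (2 * 2 ^ s) = 2 ^ k * Nat.card {x : Fin k → ZMod (2 ^ s) //
      ((∑ i, x i ^ 2 = (lam : ZMod (2 ^ s))) ∧ ∃ i, ¬ (2 : ZMod (2 ^ s)) ∣ x i)
        ∧ ∑ i, (((x i).val : ℕ) : ZMod (2 * 2 ^ s)) ^ 2 = (lam : ZMod (2 * 2 ^ s))} := by
    rw [← card_subtype_comp (2 ^ s) k (fun x =>
      ((∑ i, x i ^ 2 = (lam : ZMod (2 ^ s))) ∧ ∃ i, ¬ (2 : ZMod (2 ^ s)) ∣ x i)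
        ∧ ∑ i, (((x i).val : ℕ) : ZMod (2 * 2 ^ s)) ^ 2 = (lam : ZMod (2 * 2 ^ s)))]
    unfold cnt
    apply Nat.card_congr
    apply Equiv.subtypeEquivRight
    intro y
    dsimp only
    have hsum : ∑ i, y i ^ 2
        = ∑ i, ((((ZMod.cast (y i) : ZMod (2 ^ s)).val : ℕ)) : ZMod (2 * 2 ^ s)) ^ 2 :=
      Finset.sum_congr rfl fun i _ => sq_lift s (by omega) (y i)
    have hodd : (∃ i, ¬ (2 : ZMod (2 * 2 ^ s)) ∣ y i)
        ↔ ∃ i, ¬ (2 : ZMod (2 ^ s)) ∣ (ZMod.cast (y i) : ZMod (2 ^ s)) :=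
      exists_congr fun i => not_congr (two_dvd_iff s (by omega) (y i))
    constructor
    · rintro ⟨h1, h2⟩
      have hQ : ∑ i, ((((ZMod.cast (y i) : ZMod (2 ^ s)).val : ℕ)) : ZMod (2 * 2 ^ s)) ^ 2
          = (lam : ZMod (2 * 2 ^ s)) := by rw [← hsum]; exact h1
      exact ⟨⟨keyQ (by omega) lam _ hQ, hodd.mp h2⟩, hQ⟩
    · rintro ⟨⟨_, h2⟩, hQ⟩
      exact ⟨by rw [hsum]; exact hQ, hodd.mpr h2⟩
  -- split the base count according to Q
  have hsplit : cnt k lam (2 ^ s) = Nat.card {x : Fin k → ZMod (2 ^ s) //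
        ((∑ i, x i ^ 2 = (lam : ZMod (2 ^ s))) ∧ ∃ i, ¬ (2 : ZMod (2 ^ s)) ∣ x i)
          ∧ ∑ i, (((x i).val : ℕ) : ZMod (2 * 2 ^ s)) ^ 2 = (lam : ZMod (2 * 2 ^ s))}
      + Nat.card {x : Fin k → ZMod (2 ^ s) //
        ((∑ i, x i ^ 2 = (lam : ZMod (2 ^ s))) ∧ ∃ i, ¬ (2 : ZMod (2 ^ s)) ∣ x i)
          ∧ ¬ (∑ i, (((x i).val : ℕ) : ZMod (2 * 2 ^ s)) ^ 2 = (lam : ZMod (2 * 2 ^ s)))} := by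
    unfold cnt
    rw [← Nat.card_sum]
    apply Nat.card_congr
    exact ((Equiv.sumCompl fun a : {x : Fin k → ZMod (2 ^ s) //
        (∑ i, x i ^ 2 = (lam : ZMod (2 ^ s))) ∧ ∃ i, ¬ (2 : ZMod (2 ^ s)) ∣ x i} =>
          ∑ i, ((((a.1 i).val : ℕ)) : ZMod (2 * 2 ^ s)) ^ 2 = (lam : ZMod (2 * 2 ^ s))).symm.trans
      ((Equiv.subtypeSubtypeEquivSubtypeInter
          (fun x : Fin k → ZMod (2 ^ s) =>
            (∑ i, x i ^ 2 = (lam : ZMod (2 ^ s))) ∧ ∃ i, ¬ (2 : ZMod (2 ^ s)) ∣ x i)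
          (fun x : Fin k → ZMod (2 ^ s) =>
            ∑ i, (((x i).val : ℕ) : ZMod (2 * 2 ^ s)) ^ 2 = (lam : ZMod (2 * 2 ^ s)))).sumCongr
        (Equiv.subtypeSubtypeEquivSubtypeInter
          (fun x : Fin k → ZMod (2 ^ s) =>
            (∑ i, x i ^ 2 = (lam : ZMod (2 ^ s))) ∧ ∃ i, ¬ (2 : ZMod (2 ^ s)) ∣ x i)
          (fun x : Fin k → ZMod (2 ^ s) =>
            ¬ (∑ i, (((x i).val : ℕ) : ZMod (2 * 2 ^ s)) ^ 2 = (lam : ZMod (2 * 2 ^ s)))))))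
  have hAB : Nat.card {x : Fin k → ZMod (2 ^ s) //
        ((∑ i, x i ^ 2 = (lam : ZMod (2 ^ s))) ∧ ∃ i, ¬ (2 : ZMod (2 ^ s)) ∣ x i)
          ∧ ∑ i, (((x i).val : ℕ) : ZMod (2 * 2 ^ s)) ^ 2 = (lam : ZMod (2 * 2 ^ s))}
      = Nat.card {x : Fin k → ZMod (2 ^ s) //
        ((∑ i, x i ^ 2 = (lam : ZMod (2 ^ s))) ∧ ∃ i, ¬ (2 : ZMod (2 ^ s)) ∣ x i)
          ∧ ¬ (∑ i, (((x i).val : ℕ) : ZMod (2 * 2 ^ s)) ^ 2 = (lam : ZMod (2 * 2 ^ s)))} := by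
    have mapto : ∀ x : Fin k → ZMod (2 ^ s),
        ((∑ i, x i ^ 2 = (lam : ZMod (2 ^ s))) ∧ ∃ i, ¬ (2 : ZMod (2 ^ s)) ∣ x i) →
        ((∑ i, sig s k x i ^ 2 = (lam : ZMod (2 ^ s)))
          ∧ ∃ i, ¬ (2 : ZMod (2 ^ s)) ∣ sig s k x i) := by
      intro x hx
      refine ⟨?_, sig_exists hs2 x hx.2⟩
      rw [sig_sum hs2 x hx.2]
      exact hx.1
    have flip1 : ∀ x : Fin k → ZMod (2 ^ s),
        ((∑ i, x i ^ 2 = (lam : ZMod (2 ^ s))) ∧ ∃ i, ¬ (2 : ZMod (2 ^ s)) ∣ x i) →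
        (∑ i, (((x i).val : ℕ) : ZMod (2 * 2 ^ s)) ^ 2 = (lam : ZMod (2 * 2 ^ s))) →
        ¬ (∑ i, (((sig s k x i).val : ℕ)
            : ZMod (2 * 2 ^ s)) ^ 2 = (lam : ZMod (2 * 2 ^ s))) := by
      intro x hx hq hcon
      have h2 := sig_liftsum hs x hx.2
      rw [hcon, hq] at h2
      exact hnne (left_eq_add.mp h2)
    have flip2 : ∀ x : Fin k → ZMod (2 ^ s),
        ((∑ i, x i ^ 2 = (lam : ZMod (2 ^ s))) ∧ ∃ i, ¬ (2 : ZMod (2 ^ s)) ∣ x i) →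
        ¬ (∑ i, (((x i).val : ℕ) : ZMod (2 * 2 ^ s)) ^ 2 = (lam : ZMod (2 * 2 ^ s))) →
        (∑ i, (((sig s k x i).val : ℕ)
            : ZMod (2 * 2 ^ s)) ^ 2 = (lam : ZMod (2 * 2 ^ s))) := by
      intro x hx hq
      have h2 := sig_liftsum hs x hx.2
      rcases lift_sum_cases hs1 lam x hx.1 with hc | hc
      · exact absurd hc hq
      · rw [hc, add_assoc, hnn, add_zero] at h2
        exact h2
    have hinv : ∀ x : Fin k → ZMod (2 ^ s),
        ((∑ i, x i ^ 2 = (lam : ZMod (2 ^ s))) ∧ ∃ i, ¬ (2 : ZMod (2 ^ s)) ∣ x i) →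
        sig s k (sig s k x) = x := fun x hx => sig_invol hs2 x hx.2
    apply Nat.card_congr
    exact ⟨fun a => ⟨sig s k a.1, mapto a.1 a.2.1, flip1 a.1 a.2.1 a.2.2⟩,
      fun b => ⟨sig s k b.1, mapto b.1 b.2.1, flip2 b.1 b.2.1 b.2.2⟩,
      fun a => Subtype.ext (hinv a.1 a.2.1),
      fun b => Subtype.ext (hinv b.1 b.2.1)⟩
  rw [step12, hsplit, ← hAB, hkk]
  ring

end Rho1Aux

namespace Rho1Aux

lemma rho1_eq_cnt (k : ℕ) (lam : ℤ) (s : ℕ) : rho1 k lam 2 s = cnt k lam (2 ^ s) := by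
  unfold rho1 cnt
  apply Nat.card_congr
  apply Equiv.subtypeEquivRight
  intro x
  rw [show (((2:ℕ)) : ZMod (2 ^ s)) = (2 : ZMod (2 ^ s)) from Nat.cast_ofNat]

lemma rho1_pow (k : ℕ) (hk : 0 < k) (s : ℕ) (hs : 3 ≤ s) (lam : ℤ) :
    rho1 k lam 2 s = 2 ^ ((s - 3) * (k - 1)) * rho1 k lam 2 3 := by
  induction s, hs using Nat.le_induction with
  | base => simp
  | succ s hs ih =>
    have h1 : rho1 k lam 2 (s + 1) = cnt k lam (2 * 2 ^ s) := by
      rw [rho1_eq_cnt]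
      congr 1
      rw [pow_succ]
      ring
    rw [h1, cnt_step k hk s hs lam, ← rho1_eq_cnt, ih, ← mul_assoc, ← pow_add]
    congr 2
    have h2 : s + 1 - 3 = (s - 3) + 1 := by omega
    rw [h2, add_mul, one_mul]
    ring

end Rho1Aux

/-- `ρ^{(1)}_{k,λ}(2^s) = 2^{(s−3)(k−1)} · ρ^{(1)}_{k,λ mod 8}(8)` for `s ≥ 3`. -/
theorem rho1_two_pow (k : ℕ) (hk : 0 < k) (s : ℕ) (hs : 3 ≤ s)
    (lam : ℤ) (hlam0 : 0 ≤ lam) (hlam1 : lam < 2 ^ s) :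
    rho1 k lam 2 s = 2 ^ ((s - 3) * (k - 1)) * rho1 k (lam % 8) 2 3 := by
  have h8 : rho1 k (lam % 8) 2 3 = rho1 k lam 2 3 := by
    unfold rho1
    apply Nat.card_congr
    apply Equiv.subtypeEquivRight
    intro x
    have hc : ((lam % 8 : ℤ) : ZMod (2 ^ 3)) = ((lam : ℤ) : ZMod (2 ^ 3)) := by
      have h0 : (8 : ZMod (2 ^ 3)) = 0 := by decide
      rw [Int.emod_def]
      push_cast
      rw [h0]
      ring
    rw [hc]
  rw [Rho1Aux.rho1_pow k hk s hs lam, ← h8]
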